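/- For σ > 0 let ρ_σ : ℝ³ → ℝ be the Gaussian ρ_σ(x) := (σ/π)^{3/2} exp(−σ|x|²), and define the gravitational interaction energy 𝓔_σ := −∫_{ℝ³}∫_{ℝ³} ρ_σ(x) ρ_σ(y) / (8π|x−y|) dx dy. Then 𝓔_σ = −(1/(4π)) · (σ/(2π))^{1/2}. (The explicit evaluation of the field energy of a Gaussian mass distribution in the paper's discussion of Maxwell's and Abraham's negative-energy objection.) -/

import Mathlib

open scoped BigOperators

noncomputable section

/-- Euclidean 3-space. -/
abbrev E3 : Type := EuclideanSpace ℝ (Fin 3)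

/-- Partial derivative in coordinate direction `j` on Euclidean 3-space. -/
def pdE (j : Fin 3) (f : E3 → ℝ) (x : E3) : ℝ :=
  fderiv ℝ f x (EuclideanSpace.single j 1)

/-- Laplacian on Euclidean 3-space. -/
def lapE (f : E3 → ℝ) (x : E3) : ℝ :=
  ∑ j : Fin 3, pdE j (fun y => pdE j f y) x

open MeasureTheory Measure Set Metric Real Filter
open scoped ENNReal

-- 1D improper integral
lemma aux_int_Ioi (b : ℝ) (hb : 0 < b) :
    ∫ r in Ioi (0:ℝ), r * Real.exp (-b * r^2) = 1/(2*b) := by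
  have hderiv : ∀ x ∈ Ici (0:ℝ),
      HasDerivAt (fun r : ℝ => -Real.exp (-b*r^2)/(2*b)) (x * Real.exp (-b*x^2)) x := by
    intro x _
    have h1 : HasDerivAt (fun r : ℝ => -b*r^2) (-b*(2*x)) x := by
      simpa using ((hasDerivAt_pow 2 x).const_mul (-b))
    have h2 := (h1.exp).neg.div_const (2*b)
    refine h2.congr_deriv ?_
    field_simp
  have hint : IntegrableOn (fun r : ℝ => r * Real.exp (-b*r^2)) (Ioi 0) :=
    (integrable_mul_exp_neg_mul_sq hb).integrableOn
  have hlim : Tendsto (fun r : ℝ => -Real.exp (-b*r^2)/(2*b)) atTop (nhds 0) := by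
    have h1 : Tendsto (fun r : ℝ => -b*r^2) atTop atBot := by
      apply Tendsto.neg_mul_atTop (neg_neg_iff_pos.mpr hb) tendsto_const_nhds
        (tendsto_pow_atTop (two_ne_zero))
    have := (Real.tendsto_exp_atBot.comp h1).neg.div_const (2*b)
    simpa using this
  have := integral_Ioi_of_hasDerivAt_of_tendsto' hderiv hint hlim
  rw [this]
  norm_num
  ring

-- Gaussian integral on E3
lemma gauss3 (b : ℝ) (hb : 0 < b) :
    ∫ x : E3, Real.exp (-b * ‖x‖^2) = (Real.pi/b)^((3:ℝ)/2) := by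
  have := GaussianFourier.integral_rexp_neg_mul_sq_norm (V := E3) hb
  simpa [finrank_euclideanSpace_fin] using this

lemma integrable_gauss3 (b : ℝ) (hb : 0 < b) :
    Integrable (fun x : E3 => Real.exp (-b * ‖x‖^2)) := by
  have h := (GaussianFourier.integrable_cexp_neg_mul_sq_norm_add (V := E3)
      (b := (b:ℂ)) (by simpa using hb) 0 0).norm
  refine h.congr ?_
  refine Eventually.of_forall fun v => ?_
  simp only [Complex.norm_exp]
  norm_num
  left
  norm_cast

end

noncomputable section
open MeasureTheory Measure Set Metric Real Filter
open scoped ENNReal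

lemma lintegral_norm_fun_E3 (f : ℝ → ℝ≥0∞) (hf : Measurable f) :
    ∫⁻ x : E3, f ‖x‖ = 3 * volume (ball (0:E3) 1) *
      ∫⁻ r in Ioi (0:ℝ), ENNReal.ofReal (r^2) * f r := by
  have hdim : Module.finrank ℝ E3 = 3 := finrank_euclideanSpace_fin
  have h1 : ∫⁻ x : E3, f ‖x‖ = ∫⁻ x in ({0}ᶜ : Set E3), f ‖x‖ := by
    rw [MeasureTheory.restrict_compl_singleton]
  rw [h1, ← lintegral_subtype_comap (measurableSet_singleton (0:E3)).compl (fun x => f ‖x‖)]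
  have h2 := (measurePreserving_homeomorphUnitSphereProd
      (volume : Measure E3)).lintegral_comp_emb
      (Homeomorph.measurableEmbedding _) (fun p => f p.2)
  have h3 : ∀ x : ({0}ᶜ : Set E3),
      (fun p : sphere (0:E3) 1 × Ioi (0:ℝ) => f p.2) (homeomorphUnitSphereProd E3 x)
        = f ‖(x:E3)‖ := fun x => by simp [homeomorphUnitSphereProd, homeomorphSphereProd]
  rw [← funext h3, h2]
  have hmeas : Measurable (fun p : sphere (0:E3) 1 × Ioi (0:ℝ) => f p.2) :=
    hf.comp (measurable_subtype_coe.comp measurable_snd)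
  rw [lintegral_prod _ hmeas.aemeasurable]
  have hC : ∀ s : sphere (0:E3) 1,
      ∫⁻ r : Ioi (0:ℝ), f r ∂(volumeIoiPow (Module.finrank ℝ E3 - 1))
        = ∫⁻ r in Ioi (0:ℝ), ENNReal.ofReal (r^2) * f r := by
    intro s
    rw [hdim]
    show ∫⁻ r : Ioi (0:ℝ), f r ∂(volumeIoiPow 2) = _
    rw [volumeIoiPow, lintegral_withDensity_eq_lintegral_mul _
        (f := fun r : Ioi (0:ℝ) => ENNReal.ofReal ((r:ℝ)^2))
        (g := fun r : Ioi (0:ℝ) => f (r:ℝ))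
        (by fun_prop) (by fun_prop)]
    rw [← lintegral_subtype_comap measurableSet_Ioi (fun r : ℝ => ENNReal.ofReal (r^2) * f r)]
    rfl
  calc ∫⁻ s : sphere (0:E3) 1, ∫⁻ r : Ioi (0:ℝ), f r
          ∂(volumeIoiPow (Module.finrank ℝ E3 - 1)) ∂(volume : Measure E3).toSphere
      = ∫⁻ _ : sphere (0:E3) 1, (∫⁻ r in Ioi (0:ℝ), ENNReal.ofReal (r^2) * f r)
          ∂(volume : Measure E3).toSphere := by
        exact lintegral_congr hC
    _ = (∫⁻ r in Ioi (0:ℝ), ENNReal.ofReal (r^2) * f r)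
          * (volume : Measure E3).toSphere univ := lintegral_const _
    _ = _ := by
        rw [toSphere_apply_univ, hdim]
        ring

lemma integrable_inv_norm_gauss (b : ℝ) (hb : 0 < b) :
    Integrable (fun z : E3 => ‖z‖⁻¹ * Real.exp (-b * ‖z‖^2)) := by
  have hmeas : AEStronglyMeasurable (fun z : E3 => ‖z‖⁻¹ * Real.exp (-b * ‖z‖^2))
      (volume : Measure E3) := by
    apply Measurable.aestronglyMeasurable
    fun_prop
  refine ⟨hmeas, ?_⟩
  rw [hasFiniteIntegral_iff_ofReal (Eventually.of_forall fun z => by positivity)]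
  have hrw : (fun z : E3 => ENNReal.ofReal (‖z‖⁻¹ * Real.exp (-b*‖z‖^2)))
      = fun z : E3 => (fun r : ℝ => ENNReal.ofReal (r⁻¹ * Real.exp (-b*r^2))) ‖z‖ := rfl
  rw [hrw, lintegral_norm_fun_E3 (fun r : ℝ => ENNReal.ofReal (r⁻¹ * Real.exp (-b*r^2)))
    (by fun_prop)]
  have h2 : ∫⁻ r in Ioi (0:ℝ), ENNReal.ofReal (r^2) *
      ENNReal.ofReal (r⁻¹ * Real.exp (-b*r^2))
      = ∫⁻ r in Ioi (0:ℝ), ENNReal.ofReal (r * Real.exp (-b*r^2)) := by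
    apply setLIntegral_congr_fun measurableSet_Ioi
    intro r hr
    show ENNReal.ofReal (r^2) * ENNReal.ofReal (r⁻¹ * Real.exp (-b*r^2)) = ENNReal.ofReal (r * Real.exp (-b*r^2))
    rw [← ENNReal.ofReal_mul (by positivity)]
    congr 1
    have : (0:ℝ) < r := hr
    field_simp
  rw [h2]
  have h3 : ∫⁻ r in Ioi (0:ℝ), ENNReal.ofReal (r * Real.exp (-b*r^2)) < ⊤ :=
    IntegrableOn.setLIntegral_lt_top ((integrable_mul_exp_neg_mul_sq hb).integrableOn)
  exact ENNReal.mul_lt_top (ENNReal.mul_lt_top (by norm_num) measure_ball_lt_top) h3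

end

noncomputable section
open MeasureTheory Measure Set Metric Real Filter
open scoped ENNReal

lemma vol_ball_E3 : (volume (ball (0:E3) 1)).toReal = 4 * Real.pi / 3 := by
  rw [EuclideanSpace.volume_ball]
  have hΓ : Real.Gamma ((3:ℕ)/2 + 1) = 3/4 * Real.sqrt Real.pi := by
    have h32 : ((3:ℕ)/2 + 1 : ℝ) = (3/2 : ℝ) + 1 := by norm_num
    rw [h32, Real.Gamma_add_one (by norm_num)]
    have h12 : (3/2 : ℝ) = (1/2 : ℝ) + 1 := by norm_num
    rw [h12, Real.Gamma_add_one (by norm_num), Real.Gamma_one_half_eq]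
    ring
  simp only [Fintype.card_fin]
  rw [hΓ]
  have hπ : (0:ℝ) ≤ Real.pi := Real.pi_pos.le
  have hs : Real.sqrt Real.pi ^ (3:ℕ) / (3/4 * Real.sqrt Real.pi) = 4 * Real.pi / 3 := by
    have h2 : Real.sqrt Real.pi ^ (3:ℕ) = Real.pi * Real.sqrt Real.pi := by
      rw [pow_succ, sq_sqrt hπ]
    rw [h2]
    have hssq : Real.sqrt Real.pi ≠ 0 := by positivity
    field_simp
  rw [hs]
  rw [ENNReal.toReal_mul]
  simp [ENNReal.toReal_ofReal (by positivity : (0:ℝ) ≤ 4 * Real.pi / 3)]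
end

noncomputable section
open MeasureTheory Measure Set Metric Real Filter
open scoped ENNReal

lemma sq_norm_ident (x z : E3) :
    ‖x‖^2 + ‖x - z‖^2 = 2 * ‖x - (1/2:ℝ) • z‖^2 + (1/2) * ‖z‖^2 := by
  have hpar := parallelogram_law_with_norm ℝ (x - (1/2:ℝ) • z) ((1/2:ℝ) • z)
  have h1 : x - (1/2:ℝ) • z + (1/2:ℝ) • z = x := by abel
  have h2 : x - (1/2:ℝ) • z - (1/2:ℝ) • z = x - z := by
    rw [sub_sub, ← add_smul]
    norm_num
  rw [h1, h2] at hpar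
  have h3 : ‖(1/2:ℝ) • z‖^2 = (1/4) * ‖z‖^2 := by
    rw [norm_smul]
    simp [abs_of_nonneg]
    ring
  nlinarith [hpar, h3]

lemma sq_norm_lower (x z : E3) :
    ‖x‖^2/2 + ‖z‖^2/4 ≤ ‖x‖^2 + ‖x - z‖^2 := by
  have h1 : ‖z‖ ≤ ‖x‖ + ‖x - z‖ := by
    calc ‖z‖ = ‖x - (x - z)‖ := by congr 1; abel
    _ ≤ ‖x‖ + ‖x - z‖ := norm_sub_le _ _
  nlinarith [norm_nonneg x, norm_nonneg (x - z), norm_nonneg z, sq_nonneg (‖x‖ - ‖x - z‖)]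

lemma gauss_conv (σ : ℝ) (hσ : 0 < σ) (z : E3) :
    ∫ x : E3, Real.exp (-σ * ‖x‖^2) * Real.exp (-σ * ‖x - z‖^2)
      = (Real.pi/(2*σ))^((3:ℝ)/2) * Real.exp (-(σ/2) * ‖z‖^2) := by
  have h1 : ∀ x : E3, Real.exp (-σ * ‖x‖^2) * Real.exp (-σ * ‖x - z‖^2)
      = Real.exp (-(σ/2) * ‖z‖^2) * Real.exp (-(2*σ) * ‖x - (1/2:ℝ) • z‖^2) := by
    intro x
    rw [← Real.exp_add, ← Real.exp_add]
    congr 1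
    have := sq_norm_ident x z
    nlinarith [this]
  simp_rw [h1]
  rw [integral_const_mul]
  have h2 : ∫ x : E3, Real.exp (-(2*σ) * ‖x - (1/2:ℝ) • z‖^2)
      = ∫ x : E3, Real.exp (-(2*σ) * ‖x‖^2) := by
    exact integral_sub_right_eq_self (fun u : E3 => Real.exp (-(2*σ) * ‖u‖^2)) ((1/2:ℝ) • z)
  rw [h2, gauss3 _ (by positivity)]
  ring
end

noncomputable section
open MeasureTheory Measure Set Metric Real Filter
open scoped ENNReal

lemma integrable_F (σ c : ℝ) (hσ : 0 < σ) (hc : 0 ≤ c) :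
    Integrable (Function.uncurry fun x z : E3 =>
      (c * Real.exp (-σ * ‖x‖^2)) * (c * Real.exp (-σ * ‖x - z‖^2)) / (8 * Real.pi * ‖z‖))
      ((volume : Measure E3).prod (volume : Measure E3)) := by
  have hG : Integrable (fun p : E3 × E3 =>
      (c * c / (8 * Real.pi)) * (Real.exp (-(σ/2) * ‖p.1‖^2) *
        (‖p.2‖⁻¹ * Real.exp (-(σ/4) * ‖p.2‖^2))))
      ((volume : Measure E3).prod (volume : Measure E3)) := by
    exact (((integrable_gauss3 (σ/2) (by positivity)).mul_prod
      (integrable_inv_norm_gauss (σ/4) (by positivity)))).const_mul _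
  refine Integrable.mono' hG ?_ ?_
  · apply Measurable.aestronglyMeasurable
    fun_prop
  · refine Eventually.of_forall fun p => ?_
    rcases p with ⟨x, z⟩
    have hF0 : (0:ℝ) ≤ (c * Real.exp (-σ * ‖x‖^2)) * (c * Real.exp (-σ * ‖x - z‖^2))
        / (8 * Real.pi * ‖z‖) := by positivity
    simp only [Function.uncurry]
    rw [Real.norm_eq_abs, abs_of_nonneg hF0]
    have hexp : Real.exp (-σ * ‖x‖^2) * Real.exp (-σ * ‖x - z‖^2)
        ≤ Real.exp (-(σ/2) * ‖x‖^2) * Real.exp (-(σ/4) * ‖z‖^2) := by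
      rw [← Real.exp_add, ← Real.exp_add]
      apply Real.exp_le_exp.mpr
      have := sq_norm_lower x z
      nlinarith [this]
    show (c * Real.exp (-σ * ‖x‖^2)) * (c * Real.exp (-σ * ‖x - z‖^2))
        / (8 * Real.pi * ‖z‖) ≤ _
    rcases eq_or_ne z 0 with rfl | hz
    · simp only [norm_zero, mul_zero, div_zero]
      positivity
    · have hzpos : (0:ℝ) < ‖z‖ := norm_pos_iff.mpr hz
      rw [div_le_iff₀ (by positivity)]
      have goal2 : (c * Real.exp (-σ * ‖x‖^2)) * (c * Real.exp (-σ * ‖x - z‖^2))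
          ≤ c * c * (Real.exp (-(σ/2) * ‖x‖^2) * Real.exp (-(σ/4) * ‖z‖^2)) := by
        nlinarith [Real.exp_pos (-σ * ‖x‖^2), Real.exp_pos (-σ * ‖x - z‖^2),
          mul_le_mul_of_nonneg_left hexp (mul_nonneg hc hc)]
      calc (c * Real.exp (-σ * ‖x‖^2)) * (c * Real.exp (-σ * ‖x - z‖^2))
          ≤ c * c * (Real.exp (-(σ/2) * ‖x‖^2) * Real.exp (-(σ/4) * ‖z‖^2)) := goal2
        _ = (c * c / (8 * Real.pi)) * (Real.exp (-(σ/2) * ‖x‖^2) *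
              (‖z‖⁻¹ * Real.exp (-(σ/4) * ‖z‖^2))) * (8 * Real.pi * ‖z‖) := by
            field_simp
end

noncomputable section
open MeasureTheory Measure Set Metric Real Filter
open scoped ENNReal

theorem main_calc
    (σ : ℝ) (hσ : 0 < σ)
    (ρ : E3 → ℝ)
    (hρ : ∀ x : E3, ρ x = (σ / Real.pi) ^ ((3 : ℝ) / 2) * Real.exp (-σ * ‖x‖ ^ 2))
    (𝓔 : ℝ)
    (h𝓔 : 𝓔 = -∫ x : E3, ∫ y : E3, ρ x * ρ y / (8 * Real.pi * ‖x - y‖)) :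
    𝓔 = -(1 / (4 * Real.pi)) * (σ / (2 * Real.pi)) ^ ((1 : ℝ) / 2) := by
  have hπ : (0:ℝ) < Real.pi := Real.pi_pos
  set c : ℝ := (σ / Real.pi) ^ ((3 : ℝ) / 2) with hc_def
  have hc : 0 ≤ c := Real.rpow_nonneg (by positivity) _
  set F : E3 → E3 → ℝ := fun x z =>
    (c * Real.exp (-σ * ‖x‖^2)) * (c * Real.exp (-σ * ‖x - z‖^2)) / (8 * Real.pi * ‖z‖)
    with hF_def
  set K : ℝ := (σ / (2 * Real.pi)) ^ ((3 : ℝ) / 2) with hK_def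
  -- Step A: inner integral change of variables
  have stepA : ∀ x : E3, (∫ y : E3, ρ x * ρ y / (8 * Real.pi * ‖x - y‖)) = ∫ z : E3, F x z := by
    intro x
    have h := integral_sub_left_eq_self (fun z => F x z) (volume : Measure E3) x
    rw [← h]
    congr 1
    funext y
    simp only [hF_def, sub_sub_cancel, hρ]
  -- Step B: the inner integral after swapping
  have hKeq : c * c * (Real.pi/(2*σ))^((3:ℝ)/2) = K := by
    have e0 : c * c = (σ/Real.pi) ^ (3:ℝ) := by
      rw [hc_def, ← Real.rpow_add (by positivity)]
      norm_num
    have e1 : (σ/Real.pi) ^ (3:ℝ) = ((σ/Real.pi) ^ (2:ℝ)) ^ ((3:ℝ)/2) := by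
      rw [← Real.rpow_mul (by positivity)]
      norm_num
    rw [e0, e1, ← Real.mul_rpow (by positivity) (by positivity)]
    congr 1
    rw [Real.rpow_two]
    field_simp
  have stepB : ∀ z : E3, (∫ x : E3, F x z)
      = (K / (8 * Real.pi)) * (‖z‖⁻¹ * Real.exp (-(σ/2) * ‖z‖^2)) := by
    intro z
    have h1 : (∫ x : E3, F x z)
        = (∫ x : E3, Real.exp (-σ * ‖x‖^2) * Real.exp (-σ * ‖x - z‖^2))
          * ((c * c) / (8 * Real.pi * ‖z‖)) := by
      rw [← integral_mul_const]
      congr 1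
      funext x
      simp only [hF_def]
      ring
    rw [h1, gauss_conv σ hσ z]
    rcases eq_or_ne (‖z‖) 0 with hz | hz
    · simp [hz]
    · rw [← hKeq]
      ring
  -- swap
  have hswap : (∫ x : E3, ∫ z : E3, F x z) = ∫ z : E3, ∫ x : E3, F x z :=
    integral_integral_swap (integrable_F σ c hσ hc)
  -- Step D: radial integration
  have hdim : Module.finrank ℝ E3 = 3 := finrank_euclideanSpace_fin
  have stepD : (∫ z : E3, (K / (8 * Real.pi)) * (‖z‖⁻¹ * Real.exp (-(σ/2) * ‖z‖^2)))
      = K / (2 * σ) := by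
    have h := integral_fun_norm_addHaar (volume : Measure E3)
      (fun r : ℝ => (K / (8 * Real.pi)) * (r⁻¹ * Real.exp (-(σ/2) * r^2)))
    rw [hdim] at h
    have h2 : (∫ y in Ioi (0:ℝ), y ^ (3 - 1) •
        ((K / (8 * Real.pi)) * (y⁻¹ * Real.exp (-(σ/2) * y^2))))
        = (K / (8 * Real.pi)) * ∫ y in Ioi (0:ℝ), y * Real.exp (-(σ/2) * y^2) := by
      rw [← integral_const_mul]
      apply setIntegral_congr_fun measurableSet_Ioi
      intro y hy
      have hy0 : (0:ℝ) < y := hy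
      simp only [smul_eq_mul]
      field_simp
      ring
    rw [h2, aux_int_Ioi (σ/2) (by positivity), measureReal_def, vol_ball_E3] at h
    rw [h]
    simp only [nsmul_eq_mul, smul_eq_mul]
    field_simp
    ring
  -- put everything together
  have htot : (∫ x : E3, ∫ y : E3, ρ x * ρ y / (8 * Real.pi * ‖x - y‖)) = K / (2 * σ) := by
    calc (∫ x : E3, ∫ y : E3, ρ x * ρ y / (8 * Real.pi * ‖x - y‖))
        = ∫ x : E3, ∫ z : E3, F x z := by
          congr 1; funext x; exact stepA x
      _ = ∫ z : E3, ∫ x : E3, F x z := hswap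
      _ = ∫ z : E3, (K / (8 * Real.pi)) * (‖z‖⁻¹ * Real.exp (-(σ/2) * ‖z‖^2)) := by
          congr 1; funext z; exact stepB z
      _ = K / (2 * σ) := stepD
  rw [h𝓔, htot]
  -- final algebra
  have hKsplit : K = (σ / (2 * Real.pi)) * (σ / (2 * Real.pi)) ^ ((1:ℝ)/2) := by
    rw [hK_def]
    rw [show ((3:ℝ)/2) = 1 + (1:ℝ)/2 by norm_num, Real.rpow_add (by positivity), Real.rpow_one]
  rw [hKsplit]
  field_simp
  ring
end


/-- the gravitational interaction energy of the Gaussian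
`ρ_σ(x) = (σ/π)^{3/2} exp(-σ|x|²)` is
`𝓔_σ = -∫∫ ρ_σ(x)ρ_σ(y)/(8π|x-y|) dx dy = -(1/(4π))·(σ/(2π))^{1/2}`. -/
theorem gaussian_gravitational_energy
    (σ : ℝ) (hσ : 0 < σ)
    (ρ : E3 → ℝ)
    (hρ : ∀ x : E3, ρ x = (σ / Real.pi) ^ ((3 : ℝ) / 2) * Real.exp (-σ * ‖x‖ ^ 2))
    (𝓔 : ℝ)
    (h𝓔 : 𝓔 = -∫ x : E3, ∫ y : E3, ρ x * ρ y / (8 * Real.pi * ‖x - y‖)) :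
    𝓔 = -(1 / (4 * Real.pi)) * (σ / (2 * Real.pi)) ^ ((1 : ℝ) / 2) := by
  exact main_calc σ hσ ρ hρ 𝓔 h𝓔
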